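/- Let μ be a positive Borel measure on [0,1) whose moments satisfy μ_n = O(n^{-(1+ε)}) for some ε > 0. Then the following are equivalent: (i) there exists C > 0 such that for every complex sequence (a_k)_{k≥0} with Σ_{k=0}^∞ (k+1)^{-1}|a_k|² < ∞ one has Σ_{n=0}^∞ (n+1) |Σ_{k=0}^∞ μ_{n+k} a_k|² ≤ C Σ_{k=0}^∞ (k+1)^{-1}|a_k|² (i.e., the Derivative-Hilbert operator DH_μ is bounded on the Bergman space A²); (ii) there exists C > 0 with μ([t,1)) ≤ C(1−t)² for all t ∈ [0,1) (μ is a 2-Carleson measure). -/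

import Mathlib

open MeasureTheory

/-- The `n`-th moment of a positive Borel measure on `[0,1)`. -/
noncomputable def moment (μ : Measure ℝ) (n : ℕ) : ℝ :=
  ∫ t in Set.Ico (0 : ℝ) 1, t ^ n ∂μ

section Aux

variable (μ : Measure ℝ) [IsFiniteMeasure μ]

lemma moment_nonneg (n : ℕ) : 0 ≤ moment μ n := by
  apply setIntegral_nonneg measurableSet_Ico
  intro t ht
  exact pow_nonneg ht.1 n

lemma intOn (n : ℕ) (s : Set ℝ) (hs : MeasurableSet s) (hsub : s ⊆ Set.Ico (0:ℝ) 1) :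
    IntegrableOn (fun t : ℝ => t ^ n) s μ := by
  apply Measure.integrableOn_of_bounded (M := 1) (measure_ne_top μ s) (by fun_prop)
  filter_upwards [ae_restrict_mem hs] with t ht
  have h1 := hsub ht
  rw [Real.norm_eq_abs, abs_of_nonneg (pow_nonneg h1.1 n)]
  exact pow_le_one₀ h1.1 h1.2.le

lemma setInt_le (n : ℕ) {s : Set ℝ} (hsub : s ⊆ Set.Ico (0:ℝ) 1) {B : ℝ}
    (hB : ∀ t ∈ s, t ^ n ≤ B) :
    ∫ t in s, t ^ n ∂μ ≤ B * (μ s).toReal := by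
  have h := norm_setIntegral_le_of_norm_le_const (μ := μ) (s := s) (C := B)
    (measure_lt_top μ _) (f := fun t : ℝ => t ^ n) ?_
  · exact le_trans (le_abs_self _) h
  · intro t ht
    have h1 := hsub ht
    rw [Real.norm_eq_abs, abs_of_nonneg (pow_nonneg h1.1 n)]
    exact hB t ht

lemma setInt_ge (n : ℕ) {s : Set ℝ} (hs : MeasurableSet s) (hsub : s ⊆ Set.Ico (0:ℝ) 1) {B : ℝ}
    (hB0 : 0 ≤ B) (hB : ∀ t ∈ s, B ≤ t ^ n) :
    B * (μ s).toReal ≤ ∫ t in s, t ^ n ∂μ := by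
  have : B * (μ s).toReal = ∫ _ in s, B ∂μ := by
    rw [setIntegral_const, smul_eq_mul, mul_comm]; rfl
  rw [this]
  exact setIntegral_mono_on (integrableOn_const (measure_lt_top μ s).ne)
    (intOn μ n s hs hsub) hs hB

lemma moment_le_total (n : ℕ) : moment μ n ≤ (μ (Set.Ico (0:ℝ) 1)).toReal := by
  have h := setInt_le μ n (subset_rfl) (B := 1) (fun t ht => pow_le_one₀ ht.1 ht.2.le)
  rw [one_mul] at h
  exact h

lemma moment_anti {m n : ℕ} (h : m ≤ n) : moment μ n ≤ moment μ m := by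
  apply setIntegral_mono_on (intOn μ n _ measurableSet_Ico subset_rfl)
    (intOn μ m _ measurableSet_Ico subset_rfl) measurableSet_Ico
  intro t ht
  exact pow_le_pow_of_le_one ht.1 ht.2.le h

lemma tpow_mem (i : ℕ) : (1 - 1/2^i : ℝ) ∈ Set.Ico (0:ℝ) 1 := by
  constructor
  · have : (1:ℝ)/2^i ≤ 1 := by
      rw [div_le_one (by positivity)]
      exact one_le_pow₀ (by norm_num)
    linarith
  · have : (0:ℝ) < 1/2^i := by positivity
    linarith

lemma tpow_mono (i : ℕ) : (1 - 1/2^i : ℝ) ≤ 1 - 1/2^(i+1) := by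
  have : (1:ℝ)/2^(i+1) ≤ 1/2^i := by
    apply div_le_div_of_nonneg_left (by norm_num) (by positivity)
    exact pow_le_pow_right₀ (by norm_num) (Nat.le_succ i)
  linarith

lemma decomp (m J : ℕ) : moment μ m ≤
    (∑ i ∈ Finset.range J,
      (1 - 1/2^(i+1) : ℝ)^m * (μ (Set.Ico (1 - 1/2^i : ℝ) 1)).toReal) +
    ∫ t in Set.Ico (1 - 1/2^J : ℝ) 1, t^m ∂μ := by
  induction J with
  | zero => simp [moment]
  | succ J ih =>
    refine le_trans ih ?_
    rw [Finset.sum_range_succ, add_assoc]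
    gcongr
    have hsub1 : Set.Ico (1 - 1/2^J : ℝ) (1 - 1/2^(J+1)) ⊆ Set.Ico (0:ℝ) 1 := by
      intro x hx
      exact ⟨le_trans (tpow_mem J).1 hx.1, lt_of_lt_of_le hx.2 (tpow_mem (J+1)).2.le⟩
    have hsub2 : Set.Ico (1 - 1/2^(J+1) : ℝ) 1 ⊆ Set.Ico (0:ℝ) 1 := by
      intro x hx
      exact ⟨le_trans (tpow_mem (J+1)).1 hx.1, hx.2⟩
    have hsplit : Set.Ico (1 - 1/2^J : ℝ) (1 - 1/2^(J+1)) ∪ Set.Ico (1 - 1/2^(J+1) : ℝ) 1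
        = Set.Ico (1 - 1/2^J : ℝ) 1 :=
      Set.Ico_union_Ico_eq_Ico (tpow_mono J) (tpow_mem (J+1)).2.le
    have heq : (∫ t in Set.Ico (1 - 1/2^J : ℝ) 1, t^m ∂μ) =
        (∫ t in Set.Ico (1 - 1/2^J : ℝ) (1 - 1/2^(J+1)), t^m ∂μ) +
        ∫ t in Set.Ico (1 - 1/2^(J+1) : ℝ) 1, t^m ∂μ := by
      rw [← hsplit, setIntegral_union Set.Ico_disjoint_Ico_same
        measurableSet_Ico (intOn μ m _ measurableSet_Ico hsub1)
        (intOn μ m _ measurableSet_Ico hsub2)]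
    rw [heq]
    gcongr
    calc ∫ t in Set.Ico (1 - 1/2^J : ℝ) (1 - 1/2^(J+1)), t^m ∂μ
        ≤ (1 - 1/2^(J+1) : ℝ)^m * (μ (Set.Ico (1 - 1/2^J : ℝ) (1 - 1/2^(J+1)))).toReal := by
          apply setInt_le μ m hsub1
          intro t ht
          exact pow_le_pow_left₀ (le_trans (tpow_mem J).1 ht.1) ht.2.le m
      _ ≤ (1 - 1/2^(J+1) : ℝ)^m * (μ (Set.Ico (1 - 1/2^J : ℝ) 1)).toReal := by
          apply mul_le_mul_of_nonneg_left _ (pow_nonneg (tpow_mem (J+1)).1 m)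
          exact ENNReal.toReal_mono (measure_ne_top μ _)
            (measure_mono (Set.Ico_subset_Ico_right (tpow_mem (J+1)).2.le))

lemma bern (x : ℝ) (hx0 : 0 ≤ x) (hx1 : x ≤ 1) :
    ∀ q : ℕ, (1-x)^q * (1 + q*x) ≤ 1 := by
  intro q
  induction q with
  | zero => simp
  | succ q ih =>
    have h1 : (0:ℝ) ≤ 1 - x := by linarith
    calc (1-x)^(q+1) * (1 + (q+1:ℕ)*x)
        = (1-x)^q * ((1-x) * (1 + (q+1:ℕ)*x)) := by ring
      _ ≤ (1-x)^q * (1 + q*x) := by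
          apply mul_le_mul_of_nonneg_left _ (pow_nonneg h1 q)
          push_cast
          nlinarith [sq_nonneg x, Nat.cast_nonneg (α := ℝ) q]
      _ ≤ 1 := ih

lemma cube_bound (m : ℕ) (hm : 6 ≤ m) (x : ℝ) (hx0 : 0 < x) (hx1 : x ≤ 1) :
    (1-x)^m ≤ 1 / ((m/3 : ℕ) * x)^3 := by
  set q := m / 3 with hq
  have hq2 : 2 ≤ q := by omega
  have hqx : (0:ℝ) < q * x := by
    apply mul_pos _ hx0
    exact_mod_cast Nat.lt_of_lt_of_le (by norm_num) hq2
  have h1 : (0:ℝ) ≤ 1 - x := by linarith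
  have h3q : (1-x)^m ≤ ((1-x)^q)^3 := by
    rw [← pow_mul]
    apply pow_le_pow_of_le_one h1 (by linarith) (by omega)
  have hb : (1-x)^q ≤ 1/(q*x) := by
    rw [le_div_iff₀ hqx]
    calc (1-x)^q * (q*x) ≤ (1-x)^q * (1 + q*x) := by
          apply mul_le_mul_of_nonneg_left _ (pow_nonneg h1 q)
          linarith
      _ ≤ 1 := bern x hx0.le hx1 q
  calc (1-x)^m ≤ ((1-x)^q)^3 := h3q
    _ ≤ (1/(q*x))^3 := by
        apply pow_le_pow_left₀ (pow_nonneg h1 q) hb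
    _ = 1 / (q*x)^3 := by rw [div_pow, one_pow]

lemma moment_decay {C : ℝ} (hC : 0 < C)
    (hCar : ∀ t ∈ Set.Ico (0:ℝ) 1, (μ (Set.Ico t 1)).toReal ≤ C * (1 - t) ^ 2) :
    ∀ m : ℕ, moment μ m ≤ (5836 * C) / ((m:ℝ)+1)^2 := by
  intro m
  have hm1 : (0:ℝ) < (m:ℝ)+1 := by positivity
  by_cases hm : m ≤ 5
  · have h1 : moment μ m ≤ C := by
      calc moment μ m ≤ (μ (Set.Ico (0:ℝ) 1)).toReal := moment_le_total μ m
        _ ≤ C * (1-0)^2 := hCar 0 (by norm_num)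
        _ = C := by norm_num
    rw [div_eq_inv_mul, ← mul_assoc]
    have h2 : ((m:ℝ)+1)^2 ≤ 36 := by
      have : (m:ℝ) ≤ 5 := by exact_mod_cast hm
      nlinarith
    calc moment μ m ≤ C := h1
      _ ≤ (((m:ℝ)+1)^2)⁻¹ * 5836 * C := by
          apply le_mul_of_one_le_left hC.le
          rw [← div_eq_inv_mul]
          rw [le_div_iff₀ (by positivity)]
          linarith
  · push_neg at hm
    set J := Nat.log 2 (m+1) with hJ
    have h2J : (2:ℝ)^J ≤ (m:ℝ)+1 := by
      have := Nat.pow_log_le_self 2 (show m+1 ≠ 0 by omega)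
      exact_mod_cast this
    have h2J' : (m:ℝ)+1 < 2^(J+1) := by
      have := Nat.lt_pow_succ_log_self (b := 2) (by norm_num) (m+1)
      exact_mod_cast this
    set q := m / 3 with hq
    have hq9 : ((m:ℝ)+1) ≤ 9 * q := by
      have : m + 1 ≤ 9 * q := by omega
      exact_mod_cast this
    have hqpos : (0:ℝ) < q := by
      have : 2 ≤ q := by omega
      exact_mod_cast Nat.lt_of_lt_of_le (by norm_num) this
    refine le_trans (decomp μ m J) ?_
    have hterm : ∀ i ∈ Finset.range J,
        (1 - 1/2^(i+1) : ℝ)^m * (μ (Set.Ico (1 - 1/2^i : ℝ) 1)).toReal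
          ≤ 8 * C * 2^i / q^3 := by
      intro i _
      have hx0 : (0:ℝ) < 1/2^(i+1) := by positivity
      have hx1 : (1:ℝ)/2^(i+1) ≤ 1 := by
        rw [div_le_one (by positivity)]
        exact one_le_pow₀ (by norm_num)
      have hcube := cube_bound m (by omega) (1/2^(i+1)) hx0 hx1
      have hmu : (μ (Set.Ico (1 - 1/2^i : ℝ) 1)).toReal ≤ C * (1/2^i)^2 := by
        have := hCar (1 - 1/2^i) (tpow_mem i)
        calc (μ (Set.Ico (1 - 1/2^i : ℝ) 1)).toReal ≤ C * (1 - (1 - 1/2^i))^2 := this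
          _ = C * (1/2^i)^2 := by ring_nf
      calc (1 - 1/2^(i+1) : ℝ)^m * (μ (Set.Ico (1 - 1/2^i : ℝ) 1)).toReal
          ≤ (1 / ((q:ℝ) * (1/2^(i+1)))^3) * (C * (1/2^i)^2) := by
            apply mul_le_mul hcube hmu (ENNReal.toReal_nonneg) (by positivity)
        _ = 8 * C * 2^i / q^3 := by
            field_simp
            ring
    have hsum : (∑ i ∈ Finset.range J,
        (1 - 1/2^(i+1) : ℝ)^m * (μ (Set.Ico (1 - 1/2^i : ℝ) 1)).toReal)
        ≤ 5832 * C / ((m:ℝ)+1)^2 := by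
      calc (∑ i ∈ Finset.range J,
          (1 - 1/2^(i+1) : ℝ)^m * (μ (Set.Ico (1 - 1/2^i : ℝ) 1)).toReal)
          ≤ ∑ i ∈ Finset.range J, 8 * C * 2^i / q^3 := Finset.sum_le_sum hterm
        _ = (8 * C / q^3) * ∑ i ∈ Finset.range J, 2^i := by
            rw [Finset.mul_sum]
            apply Finset.sum_congr rfl
            intro i _
            ring
        _ ≤ (8 * C / q^3) * 2^J := by
            apply mul_le_mul_of_nonneg_left _ (by positivity)
            have : ∑ i ∈ Finset.range J, (2:ℝ)^i = 2^J - 1 := by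
              have := geom_sum_eq (by norm_num : (2:ℝ) ≠ 1) J
              rw [this]; ring
            rw [this]; linarith
        _ ≤ (8 * C / q^3) * ((m:ℝ)+1) := by
            apply mul_le_mul_of_nonneg_left h2J (by positivity)
        _ ≤ 5832 * C / ((m:ℝ)+1)^2 := by
            rw [div_mul_eq_mul_div, div_le_div_iff₀ (by positivity) (by positivity)]
            calc 8 * C * ((m:ℝ)+1) * ((m:ℝ)+1)^2 = 8 * C * ((m:ℝ)+1)^3 := by ring
              _ ≤ 8 * C * (9*q)^3 := by
                  apply mul_le_mul_of_nonneg_left _ (by positivity)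
                  exact pow_le_pow_left₀ (by positivity) hq9 3
              _ = 5832 * C * q^3 := by ring
    have htail : (∫ t in Set.Ico (1 - 1/2^J : ℝ) 1, t^m ∂μ) ≤ 4 * C / ((m:ℝ)+1)^2 := by
      have hs : Set.Ico (1 - 1/2^J : ℝ) 1 ⊆ Set.Ico (0:ℝ) 1 := by
        intro x hx
        exact ⟨le_trans (tpow_mem J).1 hx.1, hx.2⟩
      calc (∫ t in Set.Ico (1 - 1/2^J : ℝ) 1, t^m ∂μ)
          ≤ 1 * (μ (Set.Ico (1 - 1/2^J : ℝ) 1)).toReal := by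
            apply setInt_le μ m hs
            intro t ht
            exact pow_le_one₀ (hs ht).1 ht.2.le
        _ ≤ C * (1/2^J)^2 := by
            rw [one_mul]
            have := hCar (1 - 1/2^J) (tpow_mem J)
            calc (μ (Set.Ico (1 - 1/2^J : ℝ) 1)).toReal ≤ C * (1 - (1 - 1/2^J))^2 := this
              _ = C * (1/2^J)^2 := by ring_nf
        _ ≤ 4 * C / ((m:ℝ)+1)^2 := by
            have hinv : ((1:ℝ)/2^J)^2 ≤ 4 * (((m:ℝ)+1)^2)⁻¹ := by
              have h1 : (1:ℝ)/2^J ≤ 2/((m:ℝ)+1) := by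
                rw [div_le_div_iff₀ (by positivity) hm1]
                have : (2:ℝ)^(J+1) = 2^J * 2 := by ring
                nlinarith
              calc ((1:ℝ)/2^J)^2 ≤ (2/((m:ℝ)+1))^2 :=
                    pow_le_pow_left₀ (by positivity) h1 2
                _ = 4 * (((m:ℝ)+1)^2)⁻¹ := by
                    rw [div_pow]; ring
            calc C * ((1:ℝ)/2^J)^2 ≤ C * (4 * (((m:ℝ)+1)^2)⁻¹) :=
                  mul_le_mul_of_nonneg_left hinv hC.le
              _ = 4 * C / ((m:ℝ)+1)^2 := by rw [div_eq_mul_inv]; ring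
    calc _ ≤ 5832 * C / ((m:ℝ)+1)^2 + 4 * C / ((m:ℝ)+1)^2 := add_le_add hsum htail
      _ = 5836 * C / ((m:ℝ)+1)^2 := by ring

lemma fin_inv_sq (j : ℕ) (s : Finset ℕ) : ∑ i ∈ s, (1:ℝ)/(((j:ℝ)+(i:ℝ))+1)^2 ≤ 2/((j:ℝ)+1) := by
  obtain ⟨M, hM⟩ := s.exists_nat_subset_range
  calc ∑ i ∈ s, (1:ℝ)/(((j:ℝ)+(i:ℝ))+1)^2
      ≤ ∑ i ∈ Finset.range M, (1:ℝ)/(((j:ℝ)+(i:ℝ))+1)^2 := by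
        apply Finset.sum_le_sum_of_subset_of_nonneg hM
        intro i _ _
        positivity
    _ ≤ ∑ i ∈ Finset.range M,
          2 * ((1:ℝ)/((j:ℝ)+(i:ℝ)+1) - 1/((j:ℝ)+((i:ℝ)+1)+1)) := by
        apply Finset.sum_le_sum
        intro i _
        have h1 : (0:ℝ) < (j:ℝ)+(i:ℝ)+1 := by positivity
        have h2 : (0:ℝ) < (j:ℝ)+((i:ℝ)+1)+1 := by positivity
        rw [div_sub_div _ _ (ne_of_gt h1) (ne_of_gt h2), mul_div_assoc' 2,
          div_le_div_iff₀ (by positivity) (by positivity)]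
        nlinarith [Nat.cast_nonneg (α := ℝ) i, Nat.cast_nonneg (α := ℝ) j]
    _ = 2 * ((1:ℝ)/((j:ℝ)+1) - 1/((j:ℝ)+(M:ℝ)+1)) := by
        rw [← Finset.mul_sum]
        congr 1
        have := Finset.sum_range_sub' (f := fun i : ℕ => (1:ℝ)/((j:ℝ)+(i:ℝ)+1)) M
        simp only [Nat.cast_zero, add_zero, Nat.cast_add, Nat.cast_one] at this ⊢
        rw [this]
    _ ≤ 2/((j:ℝ)+1) := by
        have h : (0:ℝ) ≤ 1/((j:ℝ)+(M:ℝ)+1) := by positivity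
        have h2 : (2:ℝ)/((j:ℝ)+1) = 2 * (1/((j:ℝ)+1)) := by rw [mul_one_div]
        rw [h2]
        nlinarith

lemma summable_inv_sq_shift (j : ℕ) :
    Summable (fun i : ℕ => (1:ℝ)/(((j:ℝ)+(i:ℝ))+1)^2) := by
  have hbase : Summable (fun i : ℕ => (1:ℝ)/((i:ℝ)+1)^2) := by
    have h := (Real.summable_one_div_nat_pow (p := 2)).mpr (by norm_num)
    have h2 := (summable_nat_add_iff (f := fun n : ℕ => 1/(n:ℝ)^2) 1).mpr h
    apply h2.congr
    intro i
    push_cast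
    ring
  apply Summable.of_nonneg_of_le (fun i => by positivity) _ hbase
  intro i
  apply div_le_div_of_nonneg_left (by norm_num) (by positivity)
  have : (0:ℝ) ≤ (j:ℝ) := Nat.cast_nonneg j
  nlinarith [Nat.cast_nonneg (α := ℝ) i]

lemma summable_moment_shift {D : ℝ} (hdecay : ∀ m, moment μ m ≤ D/((m:ℝ)+1)^2) (j : ℕ) :
    Summable (fun i : ℕ => moment μ (j + i)) := by
  apply Summable.of_nonneg_of_le (fun i => moment_nonneg μ _)
    (fun i => ?_) ((summable_inv_sq_shift j).mul_left D)
  calc moment μ (j+i) ≤ D/(((j+i:ℕ):ℝ)+1)^2 := hdecay (j+i)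
    _ = D * ((1:ℝ)/(((j:ℝ)+(i:ℝ))+1)^2) := by push_cast; rw [mul_one_div]

lemma tsum_moment_le {D : ℝ} (hdecay : ∀ m, moment μ m ≤ D/((m:ℝ)+1)^2) (j : ℕ) :
    ∑' i : ℕ, moment μ (j + i) ≤ 2*D/((j:ℝ)+1) := by
  apply Summable.tsum_le_of_sum_le (summable_moment_shift μ hdecay j)
  intro s
  calc ∑ i ∈ s, moment μ (j + i) ≤ ∑ i ∈ s, D * ((1:ℝ)/(((j:ℝ)+(i:ℝ))+1)^2) := by
        apply Finset.sum_le_sum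
        intro i _
        calc moment μ (j+i) ≤ D/(((j+i:ℕ):ℝ)+1)^2 := hdecay (j+i)
          _ = D * ((1:ℝ)/(((j:ℝ)+(i:ℝ))+1)^2) := by push_cast; rw [mul_one_div]
    _ = D * ∑ i ∈ s, (1:ℝ)/(((j:ℝ)+(i:ℝ))+1)^2 := by rw [Finset.mul_sum]
    _ ≤ D * (2/((j:ℝ)+1)) := by
        apply mul_le_mul_of_nonneg_left (fin_inv_sq j s) ?_
        have h0 := moment_nonneg μ 0
        have h1 := hdecay 0
        nlinarith
    _ = 2*D/((j:ℝ)+1) := by ring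

lemma tsum_cs (f g : ℕ → ℝ) (hf0 : ∀ n, 0 ≤ f n) (hg0 : ∀ n, 0 ≤ g n)
    (hf : Summable (fun n => f n ^ 2)) (hg : Summable (fun n => g n ^ 2)) :
    (∑' n, f n * g n) ^ 2 ≤ (∑' n, f n ^ 2) * (∑' n, g n ^ 2) := by
  set A := ∑' n, f n ^ 2
  set B := ∑' n, g n ^ 2
  have hA : 0 ≤ A := tsum_nonneg (fun n => sq_nonneg _)
  have hB : 0 ≤ B := tsum_nonneg (fun n => sq_nonneg _)
  have hfg : Summable (fun n => f n * g n) := by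
    apply Summable.of_nonneg_of_le (fun n => mul_nonneg (hf0 n) (hg0 n))
      (fun n => ?_) ((hf.add hg).mul_left (1/2))
    have := two_mul_le_add_sq (f n) (g n)
    nlinarith
  have key : ∑' n, f n * g n ≤ Real.sqrt (A * B) := by
    apply Summable.tsum_le_of_sum_le hfg
    intro s
    have h1 : (∑ i ∈ s, f i * g i)^2 ≤ (∑ i ∈ s, f i ^ 2) * (∑ i ∈ s, g i ^ 2) :=
      Finset.sum_mul_sq_le_sq_mul_sq s f g
    have h2 : (∑ i ∈ s, f i ^ 2) * (∑ i ∈ s, g i ^ 2) ≤ A * B := by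
      apply mul_le_mul (Summable.sum_le_tsum s (fun i _ => sq_nonneg _) hf)
        (Summable.sum_le_tsum s (fun i _ => sq_nonneg _) hg)
        (Finset.sum_nonneg (fun i _ => sq_nonneg _))
        hA
    have h3 : (0:ℝ) ≤ ∑ i ∈ s, f i * g i :=
      Finset.sum_nonneg (fun i _ => mul_nonneg (hf0 i) (hg0 i))
    rw [show A * B = Real.sqrt (A*B) ^ 2 from (Real.sq_sqrt (mul_nonneg hA hB)).symm] at h2
    exact le_of_sq_le_sq (le_trans h1 h2) (Real.sqrt_nonneg _)
  have h0 : (0:ℝ) ≤ ∑' n, f n * g n :=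
    tsum_nonneg (fun n => mul_nonneg (hf0 n) (hg0 n))
  calc (∑' n, f n * g n)^2 ≤ Real.sqrt (A*B) ^ 2 := by
        apply pow_le_pow_left₀ h0 key
    _ = A * B := Real.sq_sqrt (mul_nonneg hA hB)

lemma backward {C : ℝ} (hC : 0 < C)
    (hCar : ∀ t ∈ Set.Ico (0:ℝ) 1, (μ (Set.Ico t 1)).toReal ≤ C * (1 - t) ^ 2)
    (a : ℕ → ℂ) (ha : Summable (fun k : ℕ => ((k : ℝ) + 1)⁻¹ * ‖a k‖ ^ 2)) :
    ∑' n : ℕ, ((n : ℝ) + 1) * ‖∑' k : ℕ, (moment μ (n + k) : ℂ) * a k‖ ^ 2 ≤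
      (4 * (5836 * C)^2 + 1) * ∑' k : ℕ, ((k : ℝ) + 1)⁻¹ * ‖a k‖ ^ 2 := by
  set D := 5836 * C with hDdef
  have hD : 0 < D := by positivity
  have hdecay := moment_decay μ hC hCar
  set S := ∑' k : ℕ, ((k : ℝ) + 1)⁻¹ * ‖a k‖ ^ 2 with hSdef
  have hS0 : 0 ≤ S := tsum_nonneg (fun k => by positivity)
  -- basic per-(n,k) bounds
  have hmom_le : ∀ n k : ℕ, moment μ (n + k) ≤ D * ((k:ℝ)+1)⁻¹ := by
    intro n k
    calc moment μ (n+k) ≤ D/(((n+k:ℕ):ℝ)+1)^2 := hdecay (n+k)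
      _ ≤ D/((k:ℝ)+1) := by
          apply div_le_div_of_nonneg_left hD.le (by positivity)
          push_cast
          nlinarith [Nat.cast_nonneg (α := ℝ) n, Nat.cast_nonneg (α := ℝ) k]
      _ = D * ((k:ℝ)+1)⁻¹ := div_eq_mul_inv _ _
  have hQle : ∀ n k : ℕ, moment μ (n+k) * ‖a k‖^2 ≤ D * (((k:ℝ)+1)⁻¹ * ‖a k‖^2) := by
    intro n k
    rw [← mul_assoc]
    exact mul_le_mul_of_nonneg_right (hmom_le n k) (sq_nonneg _)
  have hQsum : ∀ n : ℕ, Summable (fun k => moment μ (n+k) * ‖a k‖^2) := by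
    intro n
    exact Summable.of_nonneg_of_le
      (fun k => mul_nonneg (moment_nonneg μ _) (sq_nonneg _)) (hQle n) (ha.mul_left D)
  have hTsum : ∀ n : ℕ, Summable (fun k => moment μ (n+k) * ‖a k‖) := by
    intro n
    apply Summable.of_nonneg_of_le
      (fun k => mul_nonneg (moment_nonneg μ _) (norm_nonneg _))
      (fun k => ?_) (((summable_moment_shift μ hdecay n).add (hQsum n)).mul_left (1/2))
    have h1 : ‖a k‖ ≤ (1 + ‖a k‖^2)/2 := by nlinarith [sq_nonneg (1 - ‖a k‖)]
    have h2 := moment_nonneg μ (n+k)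
    calc moment μ (n+k) * ‖a k‖ ≤ moment μ (n+k) * ((1 + ‖a k‖^2)/2) :=
          mul_le_mul_of_nonneg_left h1 h2
      _ = 1/2 * (moment μ (n+k) + moment μ (n+k) * ‖a k‖^2) := by ring
  have hasum : ∀ n : ℕ, Summable (fun k => (moment μ (n + k) : ℂ) * a k) := by
    intro n
    apply Summable.of_norm
    apply (hTsum n).congr
    intro k
    rw [norm_mul, Complex.norm_real, Real.norm_eq_abs, abs_of_nonneg (moment_nonneg μ _)]
  set T : ℕ → ℝ := fun n => ∑' k, moment μ (n+k) * ‖a k‖ with hTdef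
  set P : ℕ → ℝ := fun n => ∑' k, moment μ (n+k) with hPdef
  set Q : ℕ → ℝ := fun n => ∑' k, moment μ (n+k) * ‖a k‖^2 with hQdef
  have hQ0 : ∀ n, 0 ≤ Q n :=
    fun n => tsum_nonneg (fun k => mul_nonneg (moment_nonneg μ _) (sq_nonneg _))
  have hnorm : ∀ n : ℕ, ‖∑' k : ℕ, (moment μ (n + k) : ℂ) * a k‖ ≤ T n := by
    intro n
    have h := norm_tsum_le_tsum_norm (f := fun k => (moment μ (n + k) : ℂ) * a k) ?_
    · refine le_trans h (le_of_eq (tsum_congr fun k => ?_))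
      rw [norm_mul, Complex.norm_real, Real.norm_eq_abs, abs_of_nonneg (moment_nonneg μ _)]
    · apply (hTsum n).congr
      intro k
      rw [norm_mul, Complex.norm_real, Real.norm_eq_abs, abs_of_nonneg (moment_nonneg μ _)]
  have hCS : ∀ n : ℕ, T n ^ 2 ≤ P n * Q n := by
    intro n
    have e1 : ∀ k : ℕ, Real.sqrt (moment μ (n+k)) * (Real.sqrt (moment μ (n+k)) * ‖a k‖)
        = moment μ (n+k) * ‖a k‖ := by
      intro k
      rw [← mul_assoc, Real.mul_self_sqrt (moment_nonneg μ _)]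
    have e2 : ∀ k : ℕ, Real.sqrt (moment μ (n+k)) ^ 2 = moment μ (n+k) :=
      fun k => Real.sq_sqrt (moment_nonneg μ _)
    have e3 : ∀ k : ℕ, (Real.sqrt (moment μ (n+k)) * ‖a k‖) ^ 2
        = moment μ (n+k) * ‖a k‖^2 := by
      intro k
      rw [mul_pow, Real.sq_sqrt (moment_nonneg μ _)]
    have h := tsum_cs (fun k => Real.sqrt (moment μ (n+k)))
      (fun k => Real.sqrt (moment μ (n+k)) * ‖a k‖)
      (fun k => Real.sqrt_nonneg _)
      (fun k => mul_nonneg (Real.sqrt_nonneg _) (norm_nonneg _))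
      (by rw [show (fun k : ℕ => Real.sqrt (moment μ (n+k)) ^ 2)
            = (fun k : ℕ => moment μ (n+k)) from funext e2]
          exact summable_moment_shift μ hdecay n)
      (by rw [show (fun k : ℕ => (Real.sqrt (moment μ (n+k)) * ‖a k‖) ^ 2)
            = (fun k : ℕ => moment μ (n+k) * ‖a k‖^2) from funext e3]
          exact hQsum n)
    rw [tsum_congr e1, tsum_congr e2, tsum_congr e3] at h
    exact h
  have hP : ∀ n : ℕ, ((n:ℝ)+1) * P n ≤ 2*D := by
    intro n
    have h := tsum_moment_le μ hdecay n
    have hn : (0:ℝ) < (n:ℝ)+1 := by positivity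
    rw [div_eq_mul_inv] at h
    calc ((n:ℝ)+1) * P n ≤ ((n:ℝ)+1) * (2*D * ((n:ℝ)+1)⁻¹) :=
          mul_le_mul_of_nonneg_left h hn.le
      _ = 2*D := by field_simp
  have hQcol : ∀ F : Finset ℕ, ∑ n ∈ F, Q n ≤ 2*D*S := by
    intro F
    have hswap : ∑ n ∈ F, Q n = ∑' k : ℕ, ∑ n ∈ F, moment μ (n+k) * ‖a k‖^2 :=
      (Summable.tsum_finsetSum (fun n _ => hQsum n)).symm
    rw [hswap]
    have hmaj : Summable (fun k : ℕ => 2*D * (((k:ℝ)+1)⁻¹ * ‖a k‖^2)) := ha.mul_left _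
    have hle : ∀ k : ℕ, ∑ n ∈ F, moment μ (n+k) * ‖a k‖^2
        ≤ 2*D * (((k:ℝ)+1)⁻¹ * ‖a k‖^2) := by
      intro k
      have hcol : ∑ n ∈ F, moment μ (n+k) ≤ 2*D/((k:ℝ)+1) := by
        calc ∑ n ∈ F, moment μ (n+k) = ∑ n ∈ F, moment μ (k+n) := by
              apply Finset.sum_congr rfl
              intro n _
              rw [Nat.add_comm]
          _ ≤ ∑' n : ℕ, moment μ (k+n) :=
              Summable.sum_le_tsum F (fun n _ => moment_nonneg μ _) (summable_moment_shift μ hdecay k)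
          _ ≤ 2*D/((k:ℝ)+1) := tsum_moment_le μ hdecay k
      calc ∑ n ∈ F, moment μ (n+k) * ‖a k‖^2 = (∑ n ∈ F, moment μ (n+k)) * ‖a k‖^2 := by
            rw [Finset.sum_mul]
        _ ≤ (2*D/((k:ℝ)+1)) * ‖a k‖^2 := mul_le_mul_of_nonneg_right hcol (sq_nonneg _)
        _ = 2*D * (((k:ℝ)+1)⁻¹ * ‖a k‖^2) := by rw [div_eq_mul_inv]; ring
    calc (∑' k : ℕ, ∑ n ∈ F, moment μ (n+k) * ‖a k‖^2)
        ≤ ∑' k : ℕ, 2*D * (((k:ℝ)+1)⁻¹ * ‖a k‖^2) := by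
          apply Summable.tsum_le_tsum hle _ hmaj
          apply Summable.of_nonneg_of_le
            (fun k => Finset.sum_nonneg
              (fun n _ => mul_nonneg (moment_nonneg μ _) (sq_nonneg _))) hle hmaj
      _ = 2*D*S := by rw [tsum_mul_left]
  apply tsum_le_of_sum_le' (by positivity)
  intro F
  calc ∑ n ∈ F, ((n:ℝ)+1) * ‖∑' k : ℕ, (moment μ (n + k) : ℂ) * a k‖ ^ 2
      ≤ ∑ n ∈ F, 2*D * Q n := by
        apply Finset.sum_le_sum
        intro n _
        have h1 : ‖∑' k : ℕ, (moment μ (n + k) : ℂ) * a k‖ ^ 2 ≤ T n ^ 2 :=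
          pow_le_pow_left₀ (norm_nonneg _) (hnorm n) 2
        have hn : (0:ℝ) < (n:ℝ)+1 := by positivity
        calc ((n:ℝ)+1) * ‖∑' k : ℕ, (moment μ (n + k) : ℂ) * a k‖ ^ 2
            ≤ ((n:ℝ)+1) * (P n * Q n) :=
              mul_le_mul_of_nonneg_left (le_trans h1 (hCS n)) hn.le
          _ = (((n:ℝ)+1) * P n) * Q n := by ring
          _ ≤ 2*D * Q n := mul_le_mul_of_nonneg_right (hP n) (hQ0 n)
    _ = 2*D * ∑ n ∈ F, Q n := by rw [Finset.mul_sum]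
    _ ≤ 2*D * (2*D*S) := mul_le_mul_of_nonneg_left (hQcol F) (by positivity)
    _ ≤ (4 * D^2 + 1) * S := by nlinarith

lemma geom_summable {x : ℝ} (hx : |x| < 1) :
    Summable (fun k : ℕ => ((k:ℝ)+1) * x^k) := by
  have h1 : Summable (fun k : ℕ => (k:ℝ) * x^k) := by
    have := summable_pow_mul_geometric_of_norm_lt_one (R := ℝ) 1 (by rwa [Real.norm_eq_abs])
    apply this.congr
    intro k
    rw [pow_one]
  have h2 : Summable (fun k : ℕ => x^k) := summable_geometric_of_norm_lt_one (by rwa [Real.norm_eq_abs])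
  apply (h1.add h2).congr
  intro k
  ring

lemma geom_tsum {x : ℝ} (hx0 : 0 ≤ x) (hx : x < 1) :
    ∑' k : ℕ, ((k:ℝ)+1) * x^k = (1/(1-x))^2 := by
  have hax : |x| < 1 := by rwa [abs_of_nonneg hx0]
  have h1 : Summable (fun k : ℕ => (k:ℝ) * x^k) := by
    have := summable_pow_mul_geometric_of_norm_lt_one (R := ℝ) 1 (by rwa [Real.norm_eq_abs])
    apply this.congr
    intro k
    rw [pow_one]
  have h2 : Summable (fun k : ℕ => x^k) := summable_geometric_of_lt_one hx0 hx
  have e : ∀ k : ℕ, ((k:ℝ)+1) * x^k = (k:ℝ)*x^k + x^k := fun k => by ring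
  rw [tsum_congr e, Summable.tsum_add h1 h2]
  rw [tsum_coe_mul_geometric_of_norm_lt_one (by rwa [Real.norm_eq_abs]),
    tsum_geometric_of_lt_one hx0 hx]
  have hne : 1 - x ≠ 0 := by linarith
  field_simp
  ring

lemma forward {C₁ Cm ε : ℝ} (hC₁ : 0 < C₁) (hε : 0 < ε) (hCm : 0 < Cm)
    (hmom : ∀ n : ℕ, 1 ≤ n → moment μ n ≤ Cm * (n : ℝ) ^ (-(1 + ε)))
    (hbdd : ∀ a : ℕ → ℂ, Summable (fun k : ℕ => ((k : ℝ) + 1)⁻¹ * ‖a k‖ ^ 2) →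
        ∑' n : ℕ, ((n : ℝ) + 1) * ‖∑' k : ℕ, (moment μ (n + k) : ℂ) * a k‖ ^ 2 ≤
          C₁ * ∑' k : ℕ, ((k : ℝ) + 1)⁻¹ * ‖a k‖ ^ 2)
    {t : ℝ} (ht : t ∈ Set.Ico (0:ℝ) 1) :
    (μ (Set.Ico t 1)).toReal ≤ (4 * Real.sqrt C₁) * (1 - t)^2 := by
  obtain ⟨ht0, ht1⟩ := ht
  set x := t^2 with hxdef
  have hx0 : 0 ≤ x := sq_nonneg t
  have hx1 : x < 1 := by nlinarith
  have hxabs : |x| < 1 := by rwa [abs_of_nonneg hx0]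
  have htabs : |t| < 1 := by rwa [abs_of_nonneg ht0]
  set G := (1/(1-x))^2 with hGdef
  set Gt := (1/(1-t))^2 with hGtdef
  have hGpos : 0 < G := by
    have : (0:ℝ) < 1 - x := by linarith
    positivity
  have hG := geom_tsum hx0 hx1
  have hGt := geom_tsum ht0 ht1
  set a : ℕ → ℂ := fun k => ((((k:ℝ)+1) * t^k : ℝ) : ℂ) with hadef
  have hnorma : ∀ k : ℕ, ‖a k‖ = ((k:ℝ)+1) * t^k := by
    intro k
    rw [hadef]
    rw [Complex.norm_real, Real.norm_eq_abs, abs_of_nonneg (by positivity)]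
  have hRk : ∀ k : ℕ, ((k:ℝ)+1)⁻¹ * ‖a k‖^2 = ((k:ℝ)+1) * x^k := by
    intro k
    rw [hnorma k, hxdef]
    have hk : ((k:ℝ)+1) ≠ 0 := by positivity
    rw [mul_pow, ← pow_mul, mul_comm k 2, pow_mul]
    field_simp
  have ha : Summable (fun k : ℕ => ((k : ℝ) + 1)⁻¹ * ‖a k‖ ^ 2) := by
    apply (geom_summable hxabs).congr
    intro k
    rw [hRk k]
  have hSval : (∑' k : ℕ, ((k : ℝ) + 1)⁻¹ * ‖a k‖ ^ 2) = G := by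
    rw [tsum_congr hRk, hG]
  have hineq := hbdd a ha
  rw [hSval] at hineq
  -- the real inner sums
  set R : ℕ → ℝ := fun n => ∑' k : ℕ, moment μ (n+k) * (((k:ℝ)+1) * t^k) with hRdef
  set mtot := (μ (Set.Ico (0:ℝ) 1)).toReal with hmtotdef
  have hsumR : ∀ n : ℕ, Summable (fun k : ℕ => moment μ (n+k) * (((k:ℝ)+1) * t^k)) := by
    intro n
    apply Summable.of_nonneg_of_le
      (fun k => mul_nonneg (moment_nonneg μ _) (by positivity))
      (fun k => ?_) ((geom_summable htabs).mul_left mtot)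
    exact mul_le_mul_of_nonneg_right (moment_le_total μ (n+k)) (by positivity)
  have hR0 : ∀ n, 0 ≤ R n :=
    fun n => tsum_nonneg (fun k => mul_nonneg (moment_nonneg μ _) (by positivity))
  have hSn : ∀ n : ℕ, (∑' k : ℕ, (moment μ (n + k) : ℂ) * a k) = ((R n : ℝ) : ℂ) := by
    intro n
    rw [hRdef, Complex.ofReal_tsum]
    apply tsum_congr
    intro k
    rw [hadef]
    push_cast
    ring
  have hnormSn : ∀ n : ℕ, ‖∑' k : ℕ, (moment μ (n + k) : ℂ) * a k‖ ^ 2 = R n ^ 2 := by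
    intro n
    rw [hSn n, Complex.norm_real, Real.norm_eq_abs, sq_abs]
  set M := (μ (Set.Ico t 1)).toReal with hMdef
  have hM0 : 0 ≤ M := ENNReal.toReal_nonneg
  have hsubt : Set.Ico t 1 ⊆ Set.Ico (0:ℝ) 1 := fun s hs => ⟨le_trans ht0 hs.1, hs.2⟩
  -- lower bound for moments
  have hmomge : ∀ m : ℕ, t^m * M ≤ moment μ m := by
    intro m
    have h1 : t^m * M ≤ ∫ s in Set.Ico t 1, s^m ∂μ := by
      apply setInt_ge μ m measurableSet_Ico hsubt (by positivity)
      intro s hs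
      exact pow_le_pow_left₀ ht0 hs.1 m
    have h2 : (∫ s in Set.Ico t 1, s^m ∂μ) ≤ moment μ m := by
      apply setIntegral_mono_set (intOn μ m _ measurableSet_Ico subset_rfl)
      · filter_upwards [ae_restrict_mem measurableSet_Ico] with s hs
        exact pow_nonneg hs.1 m
      · exact HasSubset.Subset.eventuallyLE hsubt
    linarith
  -- lower bound for R n
  have hlow : ∀ n : ℕ, M * t^n * G ≤ R n := by
    intro n
    have hper : ∀ k : ℕ, M * t^n * (((k:ℝ)+1) * x^k)
        ≤ moment μ (n+k) * (((k:ℝ)+1) * t^k) := by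
      intro k
      have h := mul_le_mul_of_nonneg_right (hmomge (n+k))
        (show (0:ℝ) ≤ ((k:ℝ)+1) * t^k by positivity)
      calc M * t^n * (((k:ℝ)+1) * x^k) = t^(n+k) * M * (((k:ℝ)+1) * t^k) := by
            rw [hxdef]
            ring
        _ ≤ moment μ (n+k) * (((k:ℝ)+1) * t^k) := h
    have hlsum : Summable (fun k : ℕ => M * t^n * (((k:ℝ)+1) * x^k)) :=
      (geom_summable hxabs).mul_left _
    calc M * t^n * G = ∑' k : ℕ, M * t^n * (((k:ℝ)+1) * x^k) := by
          rw [tsum_mul_left, hG]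
      _ ≤ R n := Summable.tsum_le_tsum hper hlsum (hsumR n)
  -- upper bound for R n
  have hup : ∀ n : ℕ, R n ≤ moment μ n * Gt := by
    intro n
    have hper : ∀ k : ℕ, moment μ (n+k) * (((k:ℝ)+1) * t^k)
        ≤ moment μ n * (((k:ℝ)+1) * t^k) :=
      fun k => mul_le_mul_of_nonneg_right (moment_anti μ (Nat.le_add_right n k)) (by positivity)
    calc R n ≤ ∑' k : ℕ, moment μ n * (((k:ℝ)+1) * t^k) :=
          Summable.tsum_le_tsum hper (hsumR n) ((geom_summable htabs).mul_left _)
      _ = moment μ n * Gt := by rw [tsum_mul_left, hGt]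
  -- outer summability
  have houter : Summable (fun n : ℕ => ((n:ℝ)+1) * R n ^ 2) := by
    apply (summable_nat_add_iff 1).mp
    have hmaj : Summable (fun n : ℕ => (2*Cm^2*Gt^2) * ((n:ℝ)+1)^(-(1+2*ε))) := by
      apply Summable.mul_left
      have hbase := (Real.summable_nat_rpow (p := -(1+2*ε))).mpr (by linarith)
      have := (summable_nat_add_iff (f := fun n : ℕ => (n:ℝ)^(-(1+2*ε))) 1).mpr hbase
      apply this.congr
      intro n
      push_cast
      ring_nf
    apply Summable.of_nonneg_of_le (fun n => by positivity) (fun n => ?_) hmaj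
    have hn1 : (1:ℕ) ≤ n + 1 := Nat.le_add_left 1 n
    have hy : (0:ℝ) < (n:ℝ)+1 := by positivity
    have hmn : moment μ (n+1) ≤ Cm * ((n:ℝ)+1)^(-(1+ε)) := by
      have := hmom (n+1) hn1
      rwa [show (((n+1:ℕ)):ℝ) = (n:ℝ)+1 by push_cast; ring] at this
    have hRn : R (n+1) ≤ Cm * ((n:ℝ)+1)^(-(1+ε)) * Gt := by
      calc R (n+1) ≤ moment μ (n+1) * Gt := hup (n+1)
        _ ≤ Cm * ((n:ℝ)+1)^(-(1+ε)) * Gt := by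
            apply mul_le_mul_of_nonneg_right hmn
            rw [hGtdef]; positivity
    have hGt0 : (0:ℝ) ≤ Gt := by rw [hGtdef]; positivity
    have hrp : (0:ℝ) ≤ ((n:ℝ)+1)^(-(1+ε)) := Real.rpow_nonneg hy.le _
    have hsq : R (n+1) ^ 2 ≤ (Cm * ((n:ℝ)+1)^(-(1+ε)) * Gt)^2 :=
      pow_le_pow_left₀ (hR0 (n+1)) hRn 2
    have hcast : (((n+1:ℕ)):ℝ) + 1 = (n:ℝ) + 2 := by push_cast; ring
    rw [hcast]
    calc ((n:ℝ)+2) * R (n+1) ^ 2 ≤ ((n:ℝ)+2) * (Cm * ((n:ℝ)+1)^(-(1+ε)) * Gt)^2 :=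
          mul_le_mul_of_nonneg_left hsq (by positivity)
      _ = Cm^2 * Gt^2 * (((n:ℝ)+2) * (((n:ℝ)+1)^(-(1+ε)))^2) := by ring
      _ ≤ (2*Cm^2*Gt^2) * ((n:ℝ)+1)^(-(1+2*ε)) := by
          have he : (((n:ℝ)+1)^(-(1+ε)))^2 = ((n:ℝ)+1)^(-(2+2*ε)) := by
            rw [sq, ← Real.rpow_add hy]
            norm_num
            ring_nf
          rw [he]
          have he2 : ((n:ℝ)+1) * ((n:ℝ)+1)^(-(2+2*ε)) = ((n:ℝ)+1)^(-(1+2*ε)) := by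
            nth_rewrite 1 [show ((n:ℝ)+1) = ((n:ℝ)+1)^(1:ℝ) from (Real.rpow_one _).symm]
            rw [← Real.rpow_add hy]
            norm_num
            ring_nf
          have hrp2 : (0:ℝ) ≤ ((n:ℝ)+1)^(-(2+2*ε)) := Real.rpow_nonneg hy.le _
          calc Cm^2 * Gt^2 * (((n:ℝ)+2) * (((n:ℝ)+1)^(-(2+2*ε))))
              ≤ Cm^2 * Gt^2 * ((2*((n:ℝ)+1)) * (((n:ℝ)+1)^(-(2+2*ε)))) := by
                apply mul_le_mul_of_nonneg_left _ (by positivity)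
                apply mul_le_mul_of_nonneg_right (by linarith) hrp2
            _ = (2*Cm^2*Gt^2) * (((n:ℝ)+1) * ((n:ℝ)+1)^(-(2+2*ε))) := by ring
            _ = (2*Cm^2*Gt^2) * ((n:ℝ)+1)^(-(1+2*ε)) := by rw [he2]
  -- lower bound for the outer sum
  have hlhs : M^2 * G^2 * G ≤ ∑' n : ℕ, ((n:ℝ)+1) * R n ^ 2 := by
    have hper : ∀ n : ℕ, M^2 * G^2 * (((n:ℝ)+1) * x^n) ≤ ((n:ℝ)+1) * R n ^ 2 := by
      intro n
      have h1 : (M * t^n * G)^2 ≤ R n ^ 2 :=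
        pow_le_pow_left₀ (by positivity) (hlow n) 2
      calc M^2 * G^2 * (((n:ℝ)+1) * x^n) = ((n:ℝ)+1) * (M * t^n * G)^2 := by
            rw [hxdef]
            ring
        _ ≤ ((n:ℝ)+1) * R n ^ 2 := mul_le_mul_of_nonneg_left h1 (by positivity)
    calc M^2 * G^2 * G = ∑' n : ℕ, M^2 * G^2 * (((n:ℝ)+1) * x^n) := by
          rw [tsum_mul_left, hG]
      _ ≤ ∑' n : ℕ, ((n:ℝ)+1) * R n ^ 2 :=
          Summable.tsum_le_tsum hper ((geom_summable hxabs).mul_left _) houter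
  have hkey : M^2 * G^2 * G ≤ C₁ * G := by
    refine le_trans hlhs (le_trans (le_of_eq ?_) hineq)
    exact (tsum_congr (fun n => by rw [hnormSn n])).symm
  have h1xne : (1:ℝ) - x ≠ 0 := by
    have : (0:ℝ) < 1 - x := by linarith
    exact ne_of_gt this
  have hG2 : M^2 * G^2 ≤ C₁ := (mul_le_mul_iff_left₀ hGpos).mp hkey
  have hGx : G^2 * (1-x)^4 = 1 := by
    rw [hGdef]
    field_simp
  have hM2 : M^2 ≤ C₁ * (1-x)^4 := by
    calc M^2 = (M^2 * G^2) * (1-x)^4 := by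
          rw [mul_assoc, hGx, mul_one]
      _ ≤ C₁ * (1-x)^4 := mul_le_mul_of_nonneg_right hG2 (by positivity)
  have hsqrt : M ≤ Real.sqrt C₁ * (1-x)^2 := by
    have h := Real.sqrt_le_sqrt hM2
    rw [Real.sqrt_sq hM0] at h
    rwa [Real.sqrt_mul hC₁.le, show (1-x)^4 = ((1-x)^2)^2 by ring,
      Real.sqrt_sq (sq_nonneg _)] at h
  have hxt : (1-x)^2 ≤ 4*(1-t)^2 := by
    have h1 : 1 - x = (1-t)*(1+t) := by rw [hxdef]; ring
    nlinarith [sq_nonneg (1-t), sq_nonneg t]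
  calc M ≤ Real.sqrt C₁ * (1-x)^2 := hsqrt
    _ ≤ Real.sqrt C₁ * (4*(1-t)^2) :=
        mul_le_mul_of_nonneg_left hxt (Real.sqrt_nonneg _)
    _ = (4 * Real.sqrt C₁) * (1-t)^2 := by ring

end Aux

/-- The Derivative-Hilbert operator `DH_μ` is bounded on the Bergman space `A² = D_2`
if and only if `μ` is a `2`-Carleson measure. -/
theorem stmt_7 (μ : Measure ℝ) [IsFiniteMeasure μ]
    (hmom : ∃ ε > (0 : ℝ), ∃ C > (0 : ℝ), ∀ n : ℕ, 1 ≤ n →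
      moment μ n ≤ C * (n : ℝ) ^ (-(1 + ε))) :
    (∃ C > (0 : ℝ), ∀ a : ℕ → ℂ,
        Summable (fun k : ℕ => ((k : ℝ) + 1)⁻¹ * ‖a k‖ ^ 2) →
        ∑' n : ℕ, ((n : ℝ) + 1) * ‖∑' k : ℕ, (moment μ (n + k) : ℂ) * a k‖ ^ 2 ≤
          C * ∑' k : ℕ, ((k : ℝ) + 1)⁻¹ * ‖a k‖ ^ 2) ↔
      (∃ C > (0 : ℝ), ∀ t ∈ Set.Ico (0 : ℝ) 1,
        (μ (Set.Ico t 1)).toReal ≤ C * (1 - t) ^ 2) := by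
  constructor
  · rintro ⟨C₁, hC₁, hbdd⟩
    obtain ⟨ε, hε, Cm, hCm, hm⟩ := hmom
    refine ⟨4 * Real.sqrt C₁, ?_, fun t ht => forward μ hC₁ hε hCm hm hbdd ht⟩
    have := Real.sqrt_pos.mpr hC₁
    linarith
  · rintro ⟨C, hC, hCar⟩
    exact ⟨4*(5836*C)^2+1, by positivity, fun a ha => backward μ hC hCar a ha⟩
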